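/- Let θ : ℝ → ℝ be nondecreasing and convex on [0,∞) with θ(0) = 0, twice continuously differentiable on (0,∞) with θ'(t) ≥ 0 and θ''(t) ≥ 0 for t > 0, and with θ' extending continuously to 0. Let J be a finite set, p : J → ℝ with p_j > 0, and x : J → [0,1]. Suppose h* ≥ 0 satisfies ∑_{j∈J} min(p_j, h*)·x_j = h*, with h* > 0 if ∑_j x_j > 1 and h* = 0 if ∑_j x_j ≤ 1. Define f(x) = (∑_{j: p_j > h*} x_j·(θ(p_j) − θ(h*))) + θ(h*). Then f(x) = g_θ(x, h*) and g_θ(x, h) ≤ f(x) for every h ≥ 0; that is, f(x) = max_{h ≥ 0} g_θ(x, h). -/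

import Mathlib

/-- The scheduling analogue of `g`:
`g_θ(x, h) = (∑_{j : p_j > h} x_j·(θ(p_j) − θ(h))) + θ(h) + θ'(h)·(∑_j min(p_j, h)·x_j − h)`. -/
noncomputable def gTheta {J : Type*} [Fintype J] (θ θ' : ℝ → ℝ) (p x : J → ℝ) (h : ℝ) : ℝ :=
  (∑ j ∈ Finset.univ.filter (fun j => h < p j), x j * (θ (p j) - θ h)) + θ h
    + θ' h * ((∑ j, min (p j) h * x j) - h)

open Set Filter

lemma minScale12 {p a b : ℝ} (hp : 0 < p) (ha : 0 ≤ a) (hab : a ≤ b) :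
    a * min p b ≤ b * min p a := by
  rcases le_total p a with h | h
  · rw [min_eq_left h, min_eq_left (h.trans hab)]
    nlinarith
  · rw [min_eq_right h]
    nlinarith [min_le_right p b]

lemma psiDeriv12 (θ θ' θ'' : ℝ → ℝ)
    (hD1 : ∀ t : ℝ, 0 < t → HasDerivAt θ (θ' t) t)
    (hD2 : ∀ t : ℝ, 0 < t → HasDerivAt θ' (θ'' t) t)
    {p : ℝ} (hp : 0 < p) {t : ℝ} (ht : 0 < t) :
    HasDerivAt (fun s => θ' s * min p s - θ (min p s)) (θ'' t * min p t) t := by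
  have main : ∀ u : ℝ, 0 < u → HasDerivAt (fun s => θ' s * s - θ s) (θ'' u * u) u := by
    intro u hu
    have := ((hD2 u hu).fun_mul (hasDerivAt_id u)).fun_sub (hD1 u hu)
    exact this.congr_deriv (by simp [id_eq])
  rcases lt_trichotomy t p with hlt | heq | hgt
  · have heq : (fun s => θ' s * min p s - θ (min p s)) =ᶠ[nhds t]
        (fun s => θ' s * s - θ s) := by
      filter_upwards [isOpen_Iio.eventually_mem (show t ∈ Iio p from hlt)] with s hs
      rw [min_eq_right (le_of_lt hs)]
    rw [min_eq_right hlt.le]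
    exact (main t ht).congr_of_eventuallyEq heq
  · subst heq
    have h2 : HasDerivAt (fun s => θ' s * t - θ t) (θ'' t * t) t :=
      ((hD2 t ht).mul_const t).sub_const (θ t)
    have w1 : HasDerivWithinAt (fun s => θ' s * min t s - θ (min t s)) (θ'' t * t) (Iic t) t := by
      refine ((main t ht).hasDerivWithinAt (s := Iic t)).congr ?_ ?_
      · intro y hy
        show θ' y * min t y - θ (min t y) = θ' y * y - θ y
        rw [min_eq_right (hy : y ≤ t)]
      · show θ' t * min t t - θ (min t t) = θ' t * t - θ t
        rw [min_self]
    have w2 : HasDerivWithinAt (fun s => θ' s * min t s - θ (min t s)) (θ'' t * t) (Ici t) t := by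
      refine (h2.hasDerivWithinAt (s := Ici t)).congr ?_ ?_
      · intro y hy
        show θ' y * min t y - θ (min t y) = θ' y * t - θ t
        rw [min_eq_left (hy : t ≤ y)]
      · show θ' t * min t t - θ (min t t) = θ' t * t - θ t
        rw [min_self]
    have hu := w1.union w2
    rw [Iic_union_Ici] at hu
    rw [min_self]
    exact hasDerivWithinAt_univ.mp hu
  · have heq : (fun s => θ' s * min p s - θ (min p s)) =ᶠ[nhds t]
        (fun s => θ' s * p - θ p) := by
      filter_upwards [isOpen_Ioi.eventually_mem (show t ∈ Ioi p from hgt)] with s hs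
      rw [min_eq_left (le_of_lt hs)]
    rw [min_eq_left hgt.le]
    exact (((hD2 t ht).mul_const p).sub_const (θ p)).congr_of_eventuallyEq heq

lemma gThetaRw12 {J : Type*} [Fintype J] (θ θ' : ℝ → ℝ) (p x : J → ℝ) (h : ℝ) :
    gTheta θ θ' p x h = (∑ j, x j * θ (p j)) + (θ h - θ' h * h)
      + ∑ j, x j * (θ' h * min (p j) h - θ (min (p j) h)) := by
  unfold gTheta
  have h1 : ∑ j ∈ Finset.univ.filter (fun j => h < p j), x j * (θ (p j) - θ h)
      = ∑ j, x j * (θ (p j) - θ (min (p j) h)) := by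
    rw [Finset.sum_filter]
    refine Finset.sum_congr rfl fun j _ => ?_
    split_ifs with hj
    · rw [min_eq_right hj.le]
    · rw [min_eq_left (not_lt.mp hj)]; ring
  rw [h1]
  have e1 : ∑ j, x j * (θ (p j) - θ (min (p j) h))
      = (∑ j, x j * θ (p j)) - ∑ j, x j * θ (min (p j) h) := by
    rw [← Finset.sum_sub_distrib]
    exact Finset.sum_congr rfl fun j _ => by ring
  have e2 : ∑ j, x j * (θ' h * min (p j) h - θ (min (p j) h))
      = θ' h * (∑ j, min (p j) h * x j) - ∑ j, x j * θ (min (p j) h) := by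
    rw [Finset.mul_sum, ← Finset.sum_sub_distrib]
    exact Finset.sum_congr rfl fun j _ => by ring
  rw [e1, e2]; ring

lemma thetaCont12 (θ θ' : ℝ → ℝ) (hmono : MonotoneOn θ (Ici 0))
    (hconv : ConvexOn ℝ (Ici 0) θ) (hθ0 : θ 0 = 0)
    (hD1 : ∀ t : ℝ, 0 < t → HasDerivAt θ (θ' t) t) :
    ContinuousOn θ (Ici 0) := by
  intro a ha
  rcases eq_or_lt_of_le (Set.mem_Ici.mp ha) with rfl | hapos
  · have upper : ∀ᶠ s in nhdsWithin (0:ℝ) (Ici 0), θ s ≤ s * θ 1 := by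
      have hlt : ∀ᶠ s in nhdsWithin (0:ℝ) (Ici 0), s < 1 :=
        Filter.Eventually.filter_mono nhdsWithin_le_nhds
          (isOpen_Iio.eventually_mem (show (0:ℝ) ∈ Iio 1 by norm_num))
      filter_upwards [eventually_mem_nhdsWithin, hlt] with s hs hs1
      have h0s : (0:ℝ) ≤ s := hs
      have := hconv.2 (self_mem_Ici) (show (1:ℝ) ∈ Ici 0 by norm_num)
        (show (0:ℝ) ≤ 1 - s by linarith) h0s (show (1 - s) + s = 1 by ring)
      simpa [hθ0, smul_eq_mul] using this
    have lower : ∀ᶠ s in nhdsWithin (0:ℝ) (Ici 0), 0 ≤ θ s := by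
      filter_upwards [eventually_mem_nhdsWithin] with s hs
      rw [← hθ0]; exact hmono self_mem_Ici hs hs
    have hub : Tendsto (fun s : ℝ => s * θ 1) (nhdsWithin (0:ℝ) (Ici 0)) (nhds 0) := by
      have : Tendsto (fun s : ℝ => s * θ 1) (nhds (0:ℝ)) (nhds (0 * θ 1)) :=
        (continuous_id.mul continuous_const).tendsto 0
      rw [zero_mul] at this
      exact this.mono_left nhdsWithin_le_nhds
    have : Tendsto θ (nhdsWithin (0:ℝ) (Ici 0)) (nhds 0) :=
      tendsto_of_tendsto_of_tendsto_of_le_of_le' tendsto_const_nhds hub lower upper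
    rw [ContinuousWithinAt, hθ0]
    exact this
  · exact ((hD1 a hapos).continuousAt).continuousWithinAt

lemma fDeriv12 {J : Type*} [Fintype J] (θ θ' θ'' : ℝ → ℝ)
    (hD1 : ∀ t : ℝ, 0 < t → HasDerivAt θ (θ' t) t)
    (hD2 : ∀ t : ℝ, 0 < t → HasDerivAt θ' (θ'' t) t)
    (p x : J → ℝ) (hp : ∀ j, 0 < p j) {t : ℝ} (ht : 0 < t) :
    HasDerivAt (fun h => (∑ j, x j * θ (p j)) + (θ h - θ' h * h)
        + ∑ j, x j * (θ' h * min (p j) h - θ (min (p j) h)))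
      (θ'' t * ((∑ j, min (p j) t * x j) - t)) t := by
  have h1 : HasDerivAt (fun h => θ h - θ' h * h) (-(θ'' t * t)) t := by
    have := (hD1 t ht).fun_sub ((hD2 t ht).fun_mul (hasDerivAt_id t))
    exact this.congr_deriv (by simp [id_eq])
  have h2 : HasDerivAt (fun h => ∑ j, x j * (θ' h * min (p j) h - θ (min (p j) h)))
      (∑ j, x j * (θ'' t * min (p j) t)) t :=
    HasDerivAt.fun_sum (fun j _ =>
      (psiDeriv12 θ θ' θ'' hD1 hD2 (hp j) ht).const_mul (x j))
  have h3 := (h1.fun_add h2).const_add (∑ j, x j * θ (p j))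
  have e : ∑ j, x j * (θ'' t * min (p j) t) = θ'' t * ∑ j, min (p j) t * x j := by
    rw [Finset.mul_sum]
    exact Finset.sum_congr rfl fun j _ => by ring
  have efun : (fun h => (∑ j, x j * θ (p j)) + ((θ h - θ' h * h)
        + ∑ j, x j * (θ' h * min (p j) h - θ (min (p j) h))))
      = fun h => (∑ j, x j * θ (p j)) + (θ h - θ' h * h)
        + ∑ j, x j * (θ' h * min (p j) h - θ (min (p j) h)) := by
    funext h; ring
  have eval : -(θ'' t * t) + ∑ j, x j * (θ'' t * min (p j) t)
      = θ'' t * ((∑ j, min (p j) t * x j) - t) := by rw [e]; ring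
  rw [efun, eval] at h3
  exact h3

/-- for `θ` nondecreasing and convex on `[0,∞)` with `θ(0) = 0`, twice
continuously differentiable on `(0,∞)` with nonnegative first and second derivatives, and
with `θ'` extending continuously to `0`, if `h*` is the water level of `x` (positive iff
`∑_j x_j > 1`), then `f(x) = g_θ(x, h*)` and `g_θ(x, h) ≤ f(x)` for every `h ≥ 0`;
that is, `f(x) = max_{h ≥ 0} g_θ(x, h)`. -/
theorem stmt12 {J : Type*} [Fintype J]
    (θ θ' θ'' : ℝ → ℝ)
    (hmono : MonotoneOn θ (Set.Ici 0)) (hconv : ConvexOn ℝ (Set.Ici 0) θ) (hθ0 : θ 0 = 0)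
    (hD1 : ∀ t : ℝ, 0 < t → HasDerivAt θ (θ' t) t)
    (hD2 : ∀ t : ℝ, 0 < t → HasDerivAt θ' (θ'' t) t)
    (hθ'cont : ContinuousOn θ' (Set.Ici 0))
    (hθ''cont : ContinuousOn θ'' (Set.Ioi 0))
    (hθ'nn : ∀ t : ℝ, 0 < t → 0 ≤ θ' t)
    (hθ''nn : ∀ t : ℝ, 0 < t → 0 ≤ θ'' t)
    (p x : J → ℝ) (hp : ∀ j, 0 < p j) (hx : ∀ j, x j ∈ Set.Icc (0 : ℝ) 1)
    (hstar : ℝ) (hstar0 : 0 ≤ hstar)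
    (hwater : ∑ j, min (p j) hstar * x j = hstar)
    (hpos : 1 < ∑ j, x j → 0 < hstar)
    (hzero : ∑ j, x j ≤ 1 → hstar = 0) :
    ((∑ j ∈ Finset.univ.filter (fun j => hstar < p j), x j * (θ (p j) - θ hstar)) + θ hstar
        = gTheta θ θ' p x hstar) ∧
      ∀ h : ℝ, 0 ≤ h → gTheta θ θ' p x h ≤
        (∑ j ∈ Finset.univ.filter (fun j => hstar < p j), x j * (θ (p j) - θ hstar))
          + θ hstar := by
  have part1 : (∑ j ∈ Finset.univ.filter (fun j => hstar < p j), x j * (θ (p j) - θ hstar))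
      + θ hstar = gTheta θ θ' p x hstar := by
    unfold gTheta
    rw [hwater]
    ring
  refine ⟨part1, fun h hh => ?_⟩
  set F : ℝ → ℝ := fun h => (∑ j, x j * θ (p j)) + (θ h - θ' h * h)
      + ∑ j, x j * (θ' h * min (p j) h - θ (min (p j) h)) with hF
  have hrw : ∀ t : ℝ, gTheta θ θ' p x t = F t := fun t => gThetaRw12 θ θ' p x t
  rw [part1, hrw h, hrw hstar]
  have hθc : ContinuousOn θ (Ici 0) := thetaCont12 θ θ' hmono hconv hθ0 hD1
  have hminc : ∀ j : J, Continuous fun s : ℝ => min (p j) s :=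
    fun j => continuous_const.min continuous_id
  have hFc : ContinuousOn F (Ici 0) := by
    apply ContinuousOn.add
    apply ContinuousOn.add
    · exact continuousOn_const
    · exact hθc.sub (hθ'cont.mul continuous_id.continuousOn)
    · apply continuousOn_finset_sum
      intro j _
      apply ContinuousOn.mul continuousOn_const
      apply ContinuousOn.sub
      · exact hθ'cont.mul (hminc j).continuousOn
      · exact hθc.comp (hminc j).continuousOn (fun s hs => le_min (hp j).le hs)
  have hFd : ∀ t : ℝ, 0 < t →
      HasDerivAt F (θ'' t * ((∑ j, min (p j) t * x j) - t)) t :=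
    fun t ht => fDeriv12 θ θ' θ'' hD1 hD2 p x hp ht
  -- water-level comparisons
  have Sge : ∀ t : ℝ, 0 < t → t < hstar → t ≤ ∑ j, min (p j) t * x j := by
    intro t ht htlt
    have hstarp : 0 < hstar := lt_trans ht htlt
    have key : ∀ j ∈ Finset.univ (α := J),
        t * (min (p j) hstar * x j) ≤ hstar * (min (p j) t * x j) := by
      intro j _
      have h1 := minScale12 (hp j) ht.le htlt.le
      have h2 := (hx j).1
      nlinarith
    have hsum := Finset.sum_le_sum key
    rw [← Finset.mul_sum, ← Finset.mul_sum, hwater, mul_comm] at hsum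
    exact (mul_le_mul_iff_right₀ hstarp).mp hsum
  have Sle : ∀ t : ℝ, hstar < t → (∑ j, min (p j) t * x j) ≤ t := by
    intro t htgt
    rcases eq_or_lt_of_le hstar0 with heq | hstarp
    · -- hstar = 0, so ∑ x ≤ 1
      have hx1 : ∑ j, x j ≤ 1 := by
        by_contra hgt
        have := hpos (lt_of_not_ge hgt)
        rw [← heq] at this
        exact lt_irrefl 0 this
      have ht : 0 < t := by rw [← heq] at htgt; exact htgt
      have key : ∀ j ∈ Finset.univ (α := J), min (p j) t * x j ≤ t * x j := by
        intro j _
        exact mul_le_mul_of_nonneg_right (min_le_right _ _) (hx j).1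
      have hsum := Finset.sum_le_sum key
      rw [← Finset.mul_sum] at hsum
      nlinarith
    · have key : ∀ j ∈ Finset.univ (α := J),
          hstar * (min (p j) t * x j) ≤ t * (min (p j) hstar * x j) := by
        intro j _
        have h1 := minScale12 (hp j) hstar0 htgt.le
        have h2 := (hx j).1
        nlinarith
      have hsum := Finset.sum_le_sum key
      rw [← Finset.mul_sum, ← Finset.mul_sum, hwater, mul_comm hstar] at hsum
      exact (mul_le_mul_iff_left₀ hstarp).mp hsum
  rcases le_total h hstar with hc | hc
  · have mono : MonotoneOn F (Icc 0 hstar) := by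
      apply monotoneOn_of_deriv_nonneg (convex_Icc _ _) (hFc.mono Icc_subset_Ici_self)
      · intro t ht
        rw [interior_Icc] at ht
        exact ((hFd t ht.1).differentiableAt).differentiableWithinAt
      · intro t ht
        rw [interior_Icc] at ht
        rw [(hFd t ht.1).deriv]
        have h1 := Sge t ht.1 ht.2
        have h2 := hθ''nn t ht.1
        nlinarith
    exact mono ⟨hh, hc⟩ ⟨hstar0, le_refl _⟩ hc
  · have anti : AntitoneOn F (Ici hstar) := by
      apply antitoneOn_of_deriv_nonpos (convex_Ici _)
        (hFc.mono (Ici_subset_Ici.mpr hstar0))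
      · intro t ht
        rw [interior_Ici] at ht
        exact ((hFd t (lt_of_le_of_lt hstar0 ht)).differentiableAt).differentiableWithinAt
      · intro t ht
        rw [interior_Ici] at ht
        rw [(hFd t (lt_of_le_of_lt hstar0 ht)).deriv]
        have h1 := Sle t ht
        have h2 := hθ''nn t (lt_of_le_of_lt hstar0 ht)
        nlinarith
    exact anti self_mem_Ici hc hc
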